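/- Let V ⊆ B(H) ⊗ B(K) be a decomposable quantum multi-relation on (M, B(K)) with components V₁ ⊆ B(\overline{K}, H) and V₂ ⊆ B(H, \overline{K}), i.e. V = σ(V₁ ⊗ V₂). Let P_{V₁} ∈ M ⊗ N and P_{V₂} ∈ N^op ⊗ M^op be the elements whose Weaver actions π₁(T₁⊗T₂)(S) = T₁ S π_op(T₂) and π₂ orthogonally project B(\overline{K}, H) onto V₁ and B(H, \overline{K}) onto V₂ respectively. Then: (1) σ'(P_{V₁} ⊗ P_{V₂}) = P_V, where σ' : M ⊗ N ⊗ N^op ⊗ M^op → M ⊗ M^op ⊗ N ⊗ N^op swaps tensor components and P_V is the multi-edge indicator of V; and (2) if M is minimally represented on H, then A_{S_V} = A_{P_{V₂}} ∘ A_{P_{V₁}}, where for P_{V₁} = Σ P_i ⊗ Q_i and P_{V₂} = Σ P'_j ⊗ Q'_j one sets A_{P_{V₁}}(m) = Σ tr_H(P_i m) Q_i and A_{P_{V₂}}(n) = Σ tr_K(n P'_j) Q'_j. -/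
import Mathlib


/-!
STATEMENT 17: Let `V ⊆ B(H) ⊗ B(K)` be a decomposable quantum multi-relation on
`(M, B(K))` with components `V₁ ⊆ B(conj K, H)` and `V₂ ⊆ B(H, conj K)`, i.e.
`V = σ(V₁ ⊗ V₂)`.  Let `P_{V₁} ∈ M ⊗ N` and `P_{V₂} ∈ N^op ⊗ M^op` be the elements
whose Weaver actions `π₁(T₁⊗T₂)S = T₁ S π_op(T₂)` resp. `π₂(T₃⊗T₄)S = π_op(T₃) S T₄`
orthogonally project `B(conj K, H)` onto `V₁` and `B(H, conj K)` onto `V₂`.  Then: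
(1) `σ'(P_{V₁} ⊗ P_{V₂}) = P_V` (`σ'` the tensor-leg reshuffle, `P_V` the multi-edge
indicator of `V`); and
(2) if `M` is minimally represented (`Z(M) = M'`) then `A_{S_V} = A_{P_{V₂}} ∘ A_{P_{V₁}}`
on `M`, where `A_{P_{V₁}}(m) = Σ tr_H(P_i m) Q_i` and `A_{P_{V₂}}(n) = Σ tr_K(n P'_j) Q'_j`.

Encoding: in coordinates `B(conj K, H) = Matrix H K`, `B(H, conj K) = Matrix K H`,
`σ(T₁ ⊗ T₂)` has entries `(σ(T₁⊗T₂))_{(i,k),(j,l)} = (T₁)_{ik} (T₂)_{lj}`; `M ⊗ N` is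
realized as `span{m ⊗ₖ n}` acting on `Matrix H K` by `S ↦ entrywise contraction`;
`N^op ⊗ M^op` as `span{nᵀ ⊗ₖ mᵀ}` acting on `Matrix K H`; `M⊗M^op⊗N⊗N^op` by 4-leg
Kronecker matrices `(m₁⊗ₖm₂ᵀ)⊗ₖ(n₁⊗ₖn₂ᵀ)` with Weaver action `weaver`; and the
adjacency operators are read off the 2-leg matrices by the displayed entry formulas.
-/

open scoped Kronecker Matrix ComplexOrder

namespace Stmt17

variable {h k : Type} [Fintype h] [DecidableEq h] [Fintype k] [DecidableEq k]

def commutantS (M : StarSubalgebra ℂ (Matrix h h ℂ)) : Set (Matrix h h ℂ) :=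
  {A | ∀ m ∈ M, A * m = m * A}

def centerS (M : StarSubalgebra ℂ (Matrix h h ℂ)) : Set (Matrix h h ℂ) :=
  {z | z ∈ M ∧ ∀ m ∈ M, z * m = m * z}

/-- `σ` on pure tensors: `σ(T₁ ⊗ T₂) ∈ B(H ⊗ K)` for `T₁ ∈ B(conj K, H)`,
`T₂ ∈ B(H, conj K)`. -/
def sigmaP (T₁ : Matrix h k ℂ) (T₂ : Matrix k h ℂ) : Matrix (h × k) (h × k) ℂ :=
  Matrix.of fun p q => T₁ p.1 p.2 * T₂ q.2 q.1

/-- `σ(V₁ ⊗ V₂)`. -/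
noncomputable def sigmaSpan (V₁ : Submodule ℂ (Matrix h k ℂ))
    (V₂ : Submodule ℂ (Matrix k h ℂ)) : Submodule ℂ (Matrix (h × k) (h × k) ℂ) :=
  Submodule.span ℂ {X | ∃ T₁ ∈ V₁, ∃ T₂ ∈ V₂, X = sigmaP T₁ T₂}

/-- The representation `span{m ⊗ₖ n | m ∈ M}` of `M ⊗ N` (`N = B(K)` full). -/
def MN (M : StarSubalgebra ℂ (Matrix h h ℂ)) : Set (Matrix (h × k) (h × k) ℂ) :=
  ↑(Submodule.span ℂ {X | ∃ m ∈ M, ∃ n : Matrix k k ℂ, X = m ⊗ₖ n})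

/-- The representation `span{nᵀ ⊗ₖ mᵀ | m ∈ M}` of `N^op ⊗ M^op`. -/
def NopMop (M : StarSubalgebra ℂ (Matrix h h ℂ)) : Set (Matrix (k × h) (k × h) ℂ) :=
  ↑(Submodule.span ℂ {X | ∃ n : Matrix k k ℂ, ∃ m ∈ M, X = nᵀ ⊗ₖ (m : Matrix h h ℂ)ᵀ})

/-- The 4-leg representation of `M ⊗ M^op ⊗ N ⊗ N^op`. -/
def MMNN (M : StarSubalgebra ℂ (Matrix h h ℂ)) :
    Set (Matrix ((h × h) × k × k) ((h × h) × k × k) ℂ) :=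
  ↑(Submodule.span ℂ
      {X | ∃ m₁ ∈ M, ∃ m₂ ∈ M, ∃ n₁ n₂ : Matrix k k ℂ,
        X = ((m₁ : Matrix h h ℂ) ⊗ₖ (m₂ : Matrix h h ℂ)ᵀ) ⊗ₖ (n₁ ⊗ₖ n₂ᵀ)})

/-- The Weaver action `π₁` of `M ⊗ N` on `B(conj K, H)`:
on `m ⊗ n` and `S` it is `m S π_op(n) = m S nᵀ`. -/
noncomputable def act1 (A : Matrix (h × k) (h × k) ℂ) (S : Matrix h k ℂ) :
    Matrix h k ℂ :=
  Matrix.of fun x u => ∑ x' : h, ∑ u' : k, A (x, u) (x', u') * S x' u'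

/-- The Weaver action `π₂` of `N^op ⊗ M^op` on `B(H, conj K)`:
on `n ⊗ m` it is `S ↦ nᵀ S m`. -/
noncomputable def act2 (B : Matrix (k × h) (k × h) ℂ) (S : Matrix k h ℂ) :
    Matrix k h ℂ :=
  Matrix.of fun u x => ∑ u' : k, ∑ x' : h, B (u, x) (u', x') * S u' x'

/-- The Weaver action of `M ⊗ M^op ⊗ N ⊗ N^op` on `B(H ⊗ K)`. -/
noncomputable def weaver (P : Matrix ((h × h) × k × k) ((h × h) × k × k) ℂ)
    (S : Matrix (h × k) (h × k) ℂ) : Matrix (h × k) (h × k) ℂ :=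
  Matrix.of fun r c =>
    ∑ a : h, ∑ b : h, ∑ u : k, ∑ v : k,
      P ((r.1, c.1), (r.2, c.2)) ((a, b), (u, v)) * S (a, u) (b, v)

/-- Hilbert–Schmidt inner product of (possibly rectangular) matrices. -/
noncomputable def hsInner {d e : Type} [Fintype d] [Fintype e] (A B : Matrix d e ℂ) :
    ℂ :=
  (Aᴴ * B).trace

/-- The tensor-leg reshuffle `σ' : M ⊗ N ⊗ N^op ⊗ M^op → M ⊗ M^op ⊗ N ⊗ N^op` in the
chosen representations. -/
def sigma4 (A : Matrix (h × k) (h × k) ℂ) (B : Matrix (k × h) (k × h) ℂ) :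
    Matrix ((h × h) × k × k) ((h × h) × k × k) ℂ :=
  Matrix.of fun r c =>
    A (r.1.1, r.2.1) (c.1.1, c.2.1) * B (r.2.2, r.1.2) (c.2.2, c.1.2)

/-- `S_V = (id⊗id⊗tr_K)((id⊗id⊗m)(P_V))` read off the 4-leg tensor. -/
noncomputable def sVmat (P : Matrix ((h × h) × k × k) ((h × h) × k × k) ℂ) :
    Matrix (h × h) (h × h) ℂ :=
  Matrix.of fun r c => ∑ u : k, ∑ v : k, P (r, (u, u)) (c, (v, v))

/-- The weighted adjacency operator `A_S(m) = (tr⊗id)(S(m⊗1))` of a 2-leg tensor. -/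
noncomputable def ASfun (S : Matrix (h × h) (h × h) ℂ) (m : Matrix h h ℂ) :
    Matrix h h ℂ :=
  Matrix.of fun x x' => ∑ p : h, ∑ p' : h, S (p, x') (p', x) * m p' p

/-- `A_{P_{V₁}} : M → N^op`, `A_{P_{V₁}}(m) = Σ tr_H(P_i m) Q_i`. -/
noncomputable def A1fun (A : Matrix (h × k) (h × k) ℂ) (m : Matrix h h ℂ) :
    Matrix k k ℂ :=
  Matrix.of fun u u' => ∑ x : h, ∑ x' : h, A (x, u) (x', u') * m x' x

/-- `A_{P_{V₂}} : N^op → M`, `A_{P_{V₂}}(n) = Σ tr_K(n P'_j) Q'_j`. -/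
noncomputable def A2fun (B : Matrix (k × h) (k × h) ℂ) (n : Matrix k k ℂ) :
    Matrix h h ℂ :=
  Matrix.of fun x x' => ∑ u : k, ∑ u' : k, n u u' * B (u, x') (u', x)


-- ===== auxiliary lemmas =====

lemma hs_entry {d e : Type} [Fintype d] [Fintype e] (A B : Matrix d e ℂ) :
    hsInner A B = ∑ i : d, ∑ j : e, (starRingEnd ℂ) (A i j) * B i j := by
  unfold hsInner
  rw [Matrix.trace]
  simp [Matrix.diag, Matrix.mul_apply, Matrix.conjTranspose_apply]
  rw [Finset.sum_comm]

lemma hs_conj {d e : Type} [Fintype d] [Fintype e] (A B : Matrix d e ℂ) :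
    hsInner A B = (starRingEnd ℂ) (hsInner B A) := by
  simp [hs_entry, map_sum, map_mul, mul_comm]

lemma hs_sub_left {d e : Type} [Fintype d] [Fintype e] (A B C : Matrix d e ℂ) :
    hsInner (A - B) C = hsInner A C - hsInner B C := by
  simp [hs_entry, Matrix.sub_apply, map_sub, sub_mul, Finset.sum_sub_distrib]

lemma hs_add_right {d e : Type} [Fintype d] [Fintype e] (A B C : Matrix d e ℂ) :
    hsInner A (B + C) = hsInner A B + hsInner A C := by
  simp [hs_entry, Matrix.add_apply, mul_add, Finset.sum_add_distrib]

lemma hs_smul_right {d e : Type} [Fintype d] [Fintype e] (c : ℂ) (A B : Matrix d e ℂ) :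
    hsInner A (c • B) = c * hsInner A B := by
  simp [hs_entry, Matrix.smul_apply, Finset.mul_sum]
  apply Finset.sum_congr rfl; intros; apply Finset.sum_congr rfl; intros
  ring

lemma hs_zero_right {d e : Type} [Fintype d] [Fintype e] (A : Matrix d e ℂ) :
    hsInner A (0 : Matrix d e ℂ) = 0 := by
  simp [hs_entry]

lemma hs_self_zero {d e : Type} [Fintype d] [Fintype e] (A : Matrix d e ℂ)
    (hA : hsInner A A = 0) : A = 0 := by
  rw [hs_entry] at hA
  have key : (∑ i : d, ∑ j : e, (Complex.normSq (A i j) : ℂ)) = 0 := by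
    rw [← hA]
    exact Finset.sum_congr rfl fun i _ => Finset.sum_congr rfl fun j _ =>
      Complex.normSq_eq_conj_mul_self.symm ▸ rfl
  have keyR : (∑ i : d, ∑ j : e, Complex.normSq (A i j)) = 0 := by exact_mod_cast key
  have h1 := (Finset.sum_eq_zero_iff_of_nonneg (fun i (_ : i ∈ Finset.univ) =>
    Finset.sum_nonneg fun j _ => Complex.normSq_nonneg _)).mp keyR
  ext i j
  have h2 := (Finset.sum_eq_zero_iff_of_nonneg (fun j (_ : j ∈ Finset.univ) =>
    Complex.normSq_nonneg (A i j))).mp (h1 i (Finset.mem_univ i)) j (Finset.mem_univ j)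
  simpa [Complex.normSq_eq_zero] using h2

lemma sum3_rot {β γ δ : Type} [Fintype β] [Fintype γ] [Fintype δ] (g : β → γ → δ → ℂ) :
    ∑ b, ∑ c, ∑ d, g b c d = ∑ c, ∑ d, ∑ b, g b c d := by
  have h1 : ∑ b, ∑ c, ∑ d, g b c d = ∑ b, ∑ q : γ × δ, g b q.1 q.2 := by
    simp [Fintype.sum_prod_type]
  have h2 : ∑ c, ∑ d, ∑ b, g b c d = ∑ q : γ × δ, ∑ b, g b q.1 q.2 := by
    simp [Fintype.sum_prod_type]
  rw [h1, h2, Finset.sum_comm]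

lemma sum4_swap {α β γ δ : Type} [Fintype α] [Fintype β] [Fintype γ] [Fintype δ]
    (f : α → β → γ → δ → ℂ) :
    ∑ a, ∑ b, ∑ c, ∑ d, f a b c d = ∑ c, ∑ d, ∑ a, ∑ b, f a b c d := by
  have h1 : (∑ a, ∑ b, ∑ c, ∑ d, f a b c d)
      = ∑ p : α × β, ∑ q : γ × δ, f p.1 p.2 q.1 q.2 := by
    simp [Fintype.sum_prod_type]
  have h2 : (∑ c, ∑ d, ∑ a, ∑ b, f a b c d)
      = ∑ q : γ × δ, ∑ p : α × β, f p.1 p.2 q.1 q.2 := by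
    simp [Fintype.sum_prod_type]
  rw [h1, h2, Finset.sum_comm]

lemma generic {i1 i2 : Type} [Fintype i1] [Fintype i2]
    (A : i1 → i1 → ℂ) (B : i2 → i2 → ℂ) (s : i1 → i2 → ℂ) (t₁ : i1 → ℂ) (t₂ : i2 → ℂ)
    (hA : ∀ i i', (starRingEnd ℂ) (A i i') = A i' i)
    (hB : ∀ j j', (starRingEnd ℂ) (B j j') = B j' j)
    (hT₁ : ∀ i', (∑ i, A i' i * t₁ i) = t₁ i')
    (hT₂ : ∀ j', (∑ j, B j' j * t₂ j) = t₂ j') :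
    ∑ i, ∑ j, (starRingEnd ℂ) (∑ i', ∑ j', A i i' * B j j' * s i' j') * (t₁ i * t₂ j)
      = ∑ i, ∑ j, (starRingEnd ℂ) (s i j) * (t₁ i * t₂ j) := by
  have step1 : ∑ i, ∑ j, (starRingEnd ℂ) (∑ i', ∑ j', A i i' * B j j' * s i' j') * (t₁ i * t₂ j)
      = ∑ i', ∑ j', (starRingEnd ℂ) (s i' j') *
          ((∑ i, A i' i * t₁ i) * (∑ j, B j' j * t₂ j)) := by
    have expand : ∀ i j, (starRingEnd ℂ) (∑ i', ∑ j', A i i' * B j j' * s i' j') * (t₁ i * t₂ j)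
        = ∑ i', ∑ j', (starRingEnd ℂ) (s i' j') * (A i' i * t₁ i * (B j' j * t₂ j)) := by
      intro i j
      simp only [map_sum, map_mul, Finset.sum_mul]
      apply Finset.sum_congr rfl; intro i' _
      apply Finset.sum_congr rfl; intro j' _
      rw [hA, hB]; ring
    simp only [expand]
    rw [sum4_swap]
    apply Finset.sum_congr rfl; intro i' _
    apply Finset.sum_congr rfl; intro j' _
    simp only [Finset.mul_sum, Finset.sum_mul]
    rw [Finset.sum_comm]
  rw [step1]
  apply Finset.sum_congr rfl; intro i' _
  apply Finset.sum_congr rfl; intro j' _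
  rw [hT₁, hT₂]

lemma act1_std (A : Matrix (h × k) (h × k) ℂ) (a : h) (p : k) (x : h) (u : k) :
    act1 A (Matrix.single a p 1) x u = A (x, u) (a, p) := by
  simp [act1, Matrix.single, Finset.sum_ite_eq, Finset.sum_ite_eq', ite_and,
    Prod.ext_iff]

lemma act2_std (B : Matrix (k × h) (k × h) ℂ) (q : k) (b : h) (u : k) (x : h) :
    act2 B (Matrix.single q b 1) u x = B (u, x) (q, b) := by
  simp [act2, Matrix.single, Finset.sum_ite_eq, Finset.sum_ite_eq', ite_and,
    Prod.ext_iff]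

lemma weaver_std (R : Matrix ((h × h) × k × k) ((h × h) × k × k) ℂ)
    (a b : h) (p q : k) (x y : h) (u v : k) :
    weaver R (Matrix.single (a, p) (b, q) 1) (x, u) (y, v)
      = R ((x, y), (u, v)) ((a, b), (p, q)) := by
  simp [weaver, Matrix.single, Finset.sum_ite_eq, Finset.sum_ite_eq', ite_and,
    Prod.ext_iff]

lemma proj_fix {d e : Type} [Fintype d] [Fintype e]
    (f : Matrix d e ℂ → Matrix d e ℂ) (W : Submodule ℂ (Matrix d e ℂ))
    (hp : ∀ S, f S ∈ W ∧ ∀ T ∈ W, hsInner (S - f S) T = 0) :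
    ∀ T ∈ W, f T = T := by
  intro T hT
  have hd : T - f T ∈ W := Submodule.sub_mem W hT (hp T).1
  have h0 : hsInner (T - f T) (T - f T) = 0 := (hp T).2 _ hd
  have := hs_self_zero _ h0
  have := sub_eq_zero.mp this
  exact this.symm

lemma proj_sa {d e : Type} [Fintype d] [Fintype e]
    (f : Matrix d e ℂ → Matrix d e ℂ) (W : Submodule ℂ (Matrix d e ℂ))
    (hp : ∀ S, f S ∈ W ∧ ∀ T ∈ W, hsInner (S - f S) T = 0) :
    ∀ S T, hsInner (f S) T = hsInner S (f T) := by
  have h1 : ∀ S T, hsInner S (f T) = hsInner (f S) (f T) := by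
    intro S T
    have h := (hp S).2 (f T) (hp T).1
    rw [hs_sub_left] at h
    exact (sub_eq_zero.mp h)
  intro S T
  calc hsInner (f S) T = (starRingEnd ℂ) (hsInner T (f S)) := hs_conj _ _
    _ = (starRingEnd ℂ) (hsInner (f T) (f S)) := by rw [h1 T S]
    _ = hsInner (f S) (f T) := (hs_conj _ _).symm
    _ = hsInner S (f T) := (h1 S T).symm

lemma hs_std_right {d e : Type} [Fintype d] [Fintype e] [DecidableEq d] [DecidableEq e]
    (A : Matrix d e ℂ) (i : d) (j : e) :
    hsInner A (Matrix.single i j 1) = (starRingEnd ℂ) (A i j) := by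
  simp [hs_entry, Matrix.single, Finset.sum_ite_eq, Finset.sum_ite_eq', ite_and]

lemma hs_std_left {d e : Type} [Fintype d] [Fintype e] [DecidableEq d] [DecidableEq e]
    (A : Matrix d e ℂ) (i : d) (j : e) :
    hsInner (Matrix.single i j 1) A = A i j := by
  simp [hs_entry, Matrix.single, Finset.sum_ite_eq, Finset.sum_ite_eq', ite_and,
    apply_ite (starRingEnd ℂ)]

/-- key computation: the tensor-product operator is self-adjoint-fixed on generators. -/
lemma key8 (P₁ : Matrix (h × k) (h × k) ℂ) (P₂ : Matrix (k × h) (k × h) ℂ)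
    (S : Matrix (h × k) (h × k) ℂ) (T₁ : Matrix h k ℂ) (T₂ : Matrix k h ℂ)
    (herm₁ : ∀ i i', (starRingEnd ℂ) (P₁ i i') = P₁ i' i)
    (herm₂ : ∀ j j', (starRingEnd ℂ) (P₂ j j') = P₂ j' j)
    (h₁ : act1 P₁ T₁ = T₁) (h₂ : act2 P₂ T₂ = T₂) :
    hsInner (weaver (sigma4 P₁ P₂) S) (sigmaP T₁ T₂) = hsInner S (sigmaP T₁ T₂) := by
  have hT₁ : ∀ i' : h × k, (∑ i : h × k, P₁ i' i * T₁ i.1 i.2) = T₁ i'.1 i'.2 := by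
    rintro ⟨x, u⟩
    have := congrFun (congrFun (congrArg (fun M => (M : Matrix h k ℂ)) h₁) x) u
    simpa [act1, Fintype.sum_prod_type] using this
  have hT₂ : ∀ j' : k × h, (∑ j : k × h, P₂ j' j * T₂ j.1 j.2) = T₂ j'.1 j'.2 := by
    rintro ⟨u, x⟩
    have := congrFun (congrFun (congrArg (fun M => (M : Matrix k h ℂ)) h₂) u) x
    simpa [act2, Fintype.sum_prod_type] using this
  have G := generic P₁ P₂ (fun i j => S (i.1, i.2) (j.2, j.1))
    (fun i => T₁ i.1 i.2) (fun j => T₂ j.1 j.2) herm₁ herm₂ hT₁ hT₂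
  -- rewrite both sides of the goal into the shape of G
  have L : hsInner (weaver (sigma4 P₁ P₂) S) (sigmaP T₁ T₂)
      = ∑ i : h × k, ∑ j : k × h,
          (starRingEnd ℂ) (∑ i' : h × k, ∑ j' : k × h,
            P₁ i i' * P₂ j j' * S (i'.1, i'.2) (j'.2, j'.1)) *
          ((fun i : h × k => T₁ i.1 i.2) i * (fun j : k × h => T₂ j.1 j.2) j) := by
    rw [hs_entry]
    apply Finset.sum_congr rfl; rintro ⟨x, u⟩ -
    rw [show (∑ j : h × k, (starRingEnd ℂ) (weaver (sigma4 P₁ P₂) S (x, u) j) *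
          (sigmaP T₁ T₂ (x, u) j)) = ∑ y : h, ∑ v : k,
          (starRingEnd ℂ) (weaver (sigma4 P₁ P₂) S (x, u) (y, v)) *
          (sigmaP T₁ T₂ (x, u) (y, v)) from by simp [Fintype.sum_prod_type]]
    rw [show (∑ j : k × h,
          (starRingEnd ℂ) (∑ i' : h × k, ∑ j' : k × h,
            P₁ (x, u) i' * P₂ j j' * S (i'.1, i'.2) (j'.2, j'.1)) *
          ((fun i : h × k => T₁ i.1 i.2) (x, u) * (fun j : k × h => T₂ j.1 j.2) j))
        = ∑ v : k, ∑ y : h,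
          (starRingEnd ℂ) (∑ i' : h × k, ∑ j' : k × h,
            P₁ (x, u) i' * P₂ (v, y) j' * S (i'.1, i'.2) (j'.2, j'.1)) *
          (T₁ x u * T₂ v y) from by simp [Fintype.sum_prod_type]]
    rw [Finset.sum_comm]
    apply Finset.sum_congr rfl; rintro v -
    apply Finset.sum_congr rfl; rintro y -
    congr 2
    show weaver (sigma4 P₁ P₂) S (x, u) (y, v) = _
    rw [show (∑ i' : h × k, ∑ j' : k × h,
          P₁ (x, u) i' * P₂ (v, y) j' * S (i'.1, i'.2) (j'.2, j'.1))
        = ∑ a : h, ∑ p : k, ∑ q : k, ∑ b : h,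
          P₁ (x, u) (a, p) * P₂ (v, y) (q, b) * S (a, p) (b, q) from by
        simp [Fintype.sum_prod_type]]
    show (∑ a : h, ∑ b : h, ∑ p : k, ∑ q : k,
        sigma4 P₁ P₂ ((x, y), (u, v)) ((a, b), (p, q)) * S (a, p) (b, q)) = _
    exact Finset.sum_congr rfl fun a _ => sum3_rot
      (fun b p q => sigma4 P₁ P₂ ((x, y), (u, v)) ((a, b), (p, q)) * S (a, p) (b, q))
  have R : hsInner S (sigmaP T₁ T₂)
      = ∑ i : h × k, ∑ j : k × h,
          (starRingEnd ℂ) ((fun i : h × k => fun j : k × h => S (i.1, i.2) (j.2, j.1)) i j) *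
          ((fun i : h × k => T₁ i.1 i.2) i * (fun j : k × h => T₂ j.1 j.2) j) := by
    rw [hs_entry]
    apply Finset.sum_congr rfl; rintro ⟨x, u⟩ -
    rw [show (∑ j : h × k, (starRingEnd ℂ) (S (x, u) j) * (sigmaP T₁ T₂ (x, u) j))
        = ∑ y : h, ∑ v : k, (starRingEnd ℂ) (S (x, u) (y, v)) * (T₁ x u * T₂ v y) from by
        simp [Fintype.sum_prod_type, sigmaP]]
    rw [show (∑ j : k × h,
          (starRingEnd ℂ) ((fun i : h × k => fun j : k × h => S (i.1, i.2) (j.2, j.1)) (x, u) j) *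
          ((fun i : h × k => T₁ i.1 i.2) (x, u) * (fun j : k × h => T₂ j.1 j.2) j))
        = ∑ v : k, ∑ y : h, (starRingEnd ℂ) (S (x, u) (y, v)) * (T₁ x u * T₂ v y) from by
        simp [Fintype.sum_prod_type]]
    rw [Finset.sum_comm]
  rw [L, R]
  exact G

/-- decomposition of the tensor operator applied to arbitrary `S`. -/
lemma weaver_decomp (P₁ : Matrix (h × k) (h × k) ℂ) (P₂ : Matrix (k × h) (k × h) ℂ)
    (S : Matrix (h × k) (h × k) ℂ) :
    weaver (sigma4 P₁ P₂) S
      = ∑ a : h, ∑ p : k, ∑ b : h, ∑ q : k, S (a, p) (b, q) •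
          sigmaP (act1 P₁ (Matrix.single a p 1))
                 (act2 P₂ (Matrix.single q b 1)) := by
  ext ⟨x, u⟩ ⟨y, v⟩
  show (∑ a : h, ∑ b : h, ∑ p : k, ∑ q : k,
      sigma4 P₁ P₂ ((x, y), (u, v)) ((a, b), (p, q)) * S (a, p) (b, q)) = _
  rw [show (((∑ a : h, ∑ p : k, ∑ b : h, ∑ q : k, S (a, p) (b, q) •
      sigmaP (act1 P₁ (Matrix.single a p 1))
             (act2 P₂ (Matrix.single q b 1))) : Matrix (h × k) (h × k) ℂ) (x, u) (y, v))
      = ∑ a : h, ∑ p : k, ∑ b : h, ∑ q : k, S (a, p) (b, q) *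
          (act1 P₁ (Matrix.single a p 1) x u *
           act2 P₂ (Matrix.single q b 1) v y) from by
      simp [Matrix.sum_apply, sigmaP]]
  rw [show (∑ a : h, ∑ b : h, ∑ p : k, ∑ q : k,
      sigma4 P₁ P₂ ((x, y), (u, v)) ((a, b), (p, q)) * S (a, p) (b, q))
      = ∑ a : h, ∑ p : k, ∑ q : k, ∑ b : h,
      sigma4 P₁ P₂ ((x, y), (u, v)) ((a, b), (p, q)) * S (a, p) (b, q) from
    Finset.sum_congr rfl fun a _ => sum3_rot
      (fun b p q => sigma4 P₁ P₂ ((x, y), (u, v)) ((a, b), (p, q)) * S (a, p) (b, q))]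
  apply Finset.sum_congr rfl; rintro a -
  apply Finset.sum_congr rfl; rintro p -
  rw [Finset.sum_comm]
  apply Finset.sum_congr rfl; rintro b -
  apply Finset.sum_congr rfl; rintro q -
  rw [act1_std, act2_std]
  show P₁ (x, u) (a, p) * P₂ (v, y) (q, b) * S (a, p) (b, q) = _
  ring

theorem stmt17
    (M : StarSubalgebra ℂ (Matrix h h ℂ))
    (V₁ : Submodule ℂ (Matrix h k ℂ)) (V₂ : Submodule ℂ (Matrix k h ℂ))
    (V : Submodule ℂ (Matrix (h × k) (h × k) ℂ))
    (hdec : V = sigmaSpan V₁ V₂)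
    (hbimod : ∀ A ∈ commutantS M, ∀ T ∈ V,
      (A ⊗ₖ (1 : Matrix k k ℂ)) * T ∈ V ∧ T * (A ⊗ₖ (1 : Matrix k k ℂ)) ∈ V)
    (P₁ : Matrix (h × k) (h × k) ℂ) (hP₁mem : P₁ ∈ MN M)
    (hP₁proj : ∀ S, act1 P₁ S ∈ V₁ ∧ ∀ T ∈ V₁, hsInner (S - act1 P₁ S) T = 0)
    (P₂ : Matrix (k × h) (k × h) ℂ) (hP₂mem : P₂ ∈ NopMop (k := k) M)
    (hP₂proj : ∀ S, act2 P₂ S ∈ V₂ ∧ ∀ T ∈ V₂, hsInner (S - act2 P₂ S) T = 0)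
    (P : Matrix ((h × h) × k × k) ((h × h) × k × k) ℂ) (hPmem : P ∈ MMNN (k := k) M)
    (hPproj : ∀ S, weaver P S ∈ V ∧ ∀ T ∈ V, hsInner (S - weaver P S) T = 0) :
    sigma4 P₁ P₂ = P ∧
    (centerS M = commutantS M →
      ∀ m ∈ M, ASfun (sVmat P) m = A2fun P₂ (A1fun P₁ m)) := by
  subst hdec
  -- hermiticity of P₁ and P₂
  have sa₁ := proj_sa (act1 P₁) V₁ hP₁proj
  have sa₂ := proj_sa (act2 P₂) V₂ hP₂proj
  have herm₁ : ∀ i i' : h × k, (starRingEnd ℂ) (P₁ i i') = P₁ i' i := by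
    rintro ⟨x, u⟩ ⟨x', u'⟩
    have := sa₁ (Matrix.single x' u' 1) (Matrix.single x u 1)
    rw [hs_std_right, hs_std_left, act1_std, act1_std] at this
    exact this
  have herm₂ : ∀ j j' : k × h, (starRingEnd ℂ) (P₂ j j') = P₂ j' j := by
    rintro ⟨u, x⟩ ⟨u', x'⟩
    have := sa₂ (Matrix.single u' x' 1) (Matrix.single u x 1)
    rw [hs_std_right, hs_std_left, act2_std, act2_std] at this
    exact this
  have fix₁ := proj_fix (act1 P₁) V₁ hP₁proj
  have fix₂ := proj_fix (act2 P₂) V₂ hP₂proj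
  -- the candidate projection
  set Q : Matrix ((h × h) × k × k) ((h × h) × k × k) ℂ := sigma4 P₁ P₂ with hQ
  have memQ : ∀ S, weaver Q S ∈ sigmaSpan V₁ V₂ := by
    intro S
    rw [hQ, weaver_decomp]
    apply Submodule.sum_mem; intro a _
    apply Submodule.sum_mem; intro p _
    apply Submodule.sum_mem; intro b _
    apply Submodule.sum_mem; intro q _
    apply Submodule.smul_mem
    exact Submodule.subset_span
      ⟨act1 P₁ (Matrix.single a p 1), (hP₁proj _).1,
       act2 P₂ (Matrix.single q b 1), (hP₂proj _).1, rfl⟩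
  have orthQ : ∀ S, ∀ T ∈ sigmaSpan V₁ V₂, hsInner (S - weaver Q S) T = 0 := by
    intro S T hT
    induction hT using Submodule.span_induction with
    | mem X hX =>
      obtain ⟨T₁, hT₁, T₂, hT₂, rfl⟩ := hX
      rw [hs_sub_left]
      have := key8 P₁ P₂ S T₁ T₂ herm₁ herm₂ (fix₁ T₁ hT₁) (fix₂ T₂ hT₂)
      rw [← hQ] at this
      rw [this, sub_self]
    | zero => exact hs_zero_right _
    | add X Y _ _ hX hY => rw [hs_add_right, hX, hY, add_zero]
    | smul c X _ hX => rw [hs_smul_right, hX, mul_zero]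
  -- uniqueness of the orthogonal projection
  have eqw : ∀ S, weaver Q S = weaver P S := by
    intro S
    have hD : weaver Q S - weaver P S ∈ sigmaSpan V₁ V₂ :=
      Submodule.sub_mem _ (memQ S) (hPproj S).1
    have e : weaver Q S - weaver P S = (S - weaver P S) - (S - weaver Q S) := by abel
    have h0 : hsInner ((S - weaver P S) - (S - weaver Q S)) (weaver Q S - weaver P S) = 0 := by
      rw [hs_sub_left, (hPproj S).2 _ hD, orthQ S _ hD, sub_zero]
    rw [← e] at h0
    exact sub_eq_zero.mp (hs_self_zero _ h0)

  have hQP : sigma4 P₁ P₂ = P := by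
    ext ⟨⟨x, y⟩, u, v⟩ ⟨⟨a, b⟩, p, q⟩
    have := congrFun (congrFun (eqw (Matrix.single (a, p) (b, q) 1)) (x, u)) (y, v)
    rw [hQ] at this  -- no-op safety
    rw [weaver_std, weaver_std] at this
    exact this
  refine ⟨hQP, ?_⟩
  intro _ m _
  rw [← hQP]
  ext x x'
  show (∑ p : h, ∑ p' : h, sVmat (sigma4 P₁ P₂) (p, x') (p', x) * m p' p) = _
  rw [show (A2fun P₂ (A1fun P₁ m) x x')
      = ∑ u : k, ∑ v : k, (∑ pp : h, ∑ pp' : h, P₁ (pp, u) (pp', v) * m pp' pp) *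
          P₂ (u, x') (v, x) from by
      simp [A2fun, A1fun]]
  rw [show (∑ p : h, ∑ p' : h, sVmat (sigma4 P₁ P₂) (p, x') (p', x) * m p' p)
      = ∑ p : h, ∑ p' : h, ∑ u : k, ∑ v : k,
          P₁ (p, u) (p', v) * P₂ (u, x') (v, x) * m p' p from by
      simp [sVmat, sigma4, Finset.sum_mul]]
  rw [sum4_swap]
  apply Finset.sum_congr rfl; rintro u -
  apply Finset.sum_congr rfl; rintro v -
  rw [Finset.sum_mul]
  apply Finset.sum_congr rfl; rintro p -
  rw [Finset.sum_mul]
  apply Finset.sum_congr rfl; rintro p' -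
  ring


end Stmt17
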